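/- For every m ∈ ℕ, the power series P_m ∈ ℚ⟦t⟧ has constant coefficient 1 and satisfies the differential equation t·P_m′ = m·G·P_m. -/

import Mathlib

open PowerSeries

/-- `σ d` is the sum of the positive divisors of `d`. -/
def sigmaFun (d : ℕ) : ℕ := ∑ k ∈ Nat.divisors d, k

/-- The generating series `G = ∑_{d ≥ 1} σ(d) t^d` in `ℚ⟦t⟧`. -/
noncomputable def Gser : PowerSeries ℚ :=
  PowerSeries.mk fun d => if d = 0 then 0 else (sigmaFun d : ℚ)

/-- The partial product `∏_{d=1}^{N} (1 - t^d)^{-m}` in `ℚ⟦t⟧`. -/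
noncomputable def partialProd (m N : ℕ) : PowerSeries ℚ :=
  ∏ d ∈ Finset.Icc 1 N, ((1 - (PowerSeries.X : PowerSeries ℚ) ^ d)⁻¹) ^ m

/-- The infinite product `∏_{d ≥ 1} (1 - t^d)^{-m}`, defined coefficientwise via the
stabilizing coefficients of the partial products. -/
noncomputable def Pser (m : ℕ) : PowerSeries ℚ :=
  PowerSeries.mk fun k => PowerSeries.coeff k (partialProd m k)

noncomputable def gd (d : ℕ) : PowerSeries ℚ := (1 - (PowerSeries.X : PowerSeries ℚ) ^ d)⁻¹

lemma constCoeff_one_sub (d : ℕ) (hd : 1 ≤ d) :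
    constantCoeff (1 - (X : PowerSeries ℚ) ^ d) = 1 := by
  simp [zero_pow (by omega : d ≠ 0)]

lemma gd_mul (d : ℕ) (hd : 1 ≤ d) : (1 - (X : PowerSeries ℚ) ^ d) * gd d = 1 :=
  PowerSeries.mul_inv_cancel _ (by rw [constCoeff_one_sub d hd]; norm_num)

lemma gd_eq (d : ℕ) (hd : 1 ≤ d) : gd d = 1 + (X : PowerSeries ℚ) ^ d * gd d := by
  linear_combination gd_mul d hd

lemma coeff_gd (d k : ℕ) (hd : 1 ≤ d) :
    coeff k (gd d) = if d ∣ k then 1 else 0 := by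
  have h : (PowerSeries.mk fun k => if d ∣ k then (1:ℚ) else 0) = gd d := by
    rw [gd, PowerSeries.eq_inv_iff_mul_eq_one (by rw [constCoeff_one_sub d hd]; norm_num)]
    ext n
    rw [mul_sub, mul_one, map_sub, coeff_mul_X_pow', coeff_one]
    simp only [coeff_mk]
    by_cases h0 : n = 0
    · subst h0
      simp [(by omega : ¬ d ≤ 0)]
      omega
    · by_cases hdn : d ∣ n
      · have hdle : d ≤ n := Nat.le_of_dvd (by omega) hdn
        have h2 : d ∣ n - d := Nat.dvd_sub hdn dvd_rfl
        simp [hdn, hdle, h2, h0]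
      · by_cases hdle : d ≤ n
        · have h2 : ¬ d ∣ n - d := fun hc => hdn (by
            have := Nat.dvd_add hc (dvd_refl d)
            rwa [Nat.sub_add_cancel hdle] at this)
          simp [hdn, hdle, h2, h0]
        · simp [hdn, hdle, h0]
  rw [← h, coeff_mk]

lemma deriv_X_pow (d : ℕ) (hd : 1 ≤ d) :
    (X : PowerSeries ℚ) * derivative ℚ ((X : PowerSeries ℚ) ^ d)
      = (d : PowerSeries ℚ) * X ^ d := by
  rw [Derivation.leibniz_pow, derivative_X, smul_eq_mul, mul_one, mul_smul_comm,
    ← pow_succ', Nat.sub_add_cancel hd, nsmul_eq_mul]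

lemma X_deriv_gd (d : ℕ) (hd : 1 ≤ d) :
    (X : PowerSeries ℚ) * derivative ℚ (gd d)
      = (d : PowerSeries ℚ) * X ^ d * (gd d * gd d) := by
  have h1 : derivative ℚ (gd d) = gd d ^ 2 * derivative ℚ ((X : PowerSeries ℚ) ^ d) := by
    rw [gd, derivative_inv', map_sub, Derivation.map_one_eq_zero]
    ring
  rw [h1]
  linear_combination (gd d) ^ 2 * deriv_X_pow d hd

lemma X_deriv_gd_pow (M d : ℕ) (hd : 1 ≤ d) :
    (X : PowerSeries ℚ) * derivative ℚ (gd d ^ M)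
      = (M : PowerSeries ℚ) * ((d : PowerSeries ℚ) * X ^ d * gd d) * gd d ^ M := by
  cases M with
  | zero => simp
  | succ k =>
    rw [Derivation.leibniz_pow, Nat.add_sub_cancel, smul_eq_mul, nsmul_eq_mul]
    push_cast
    linear_combination ((k : PowerSeries ℚ) + 1) * (gd d) ^ k * X_deriv_gd d hd

lemma prod_ODE (m : ℕ) (s : Finset ℕ) (hs : ∀ d ∈ s, 1 ≤ d) :
    (X : PowerSeries ℚ) * derivative ℚ (∏ d ∈ s, gd d ^ m)
      = (m : PowerSeries ℚ) * (∑ d ∈ s, (d : PowerSeries ℚ) * X ^ d * gd d)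
        * ∏ d ∈ s, gd d ^ m := by
  revert hs
  induction s using Finset.cons_induction with
  | empty => intro _; simp
  | cons a s ha ih =>
    intro hs
    have hIH := ih (fun d hd => hs d (Finset.mem_cons_of_mem hd))
    have hA := X_deriv_gd_pow m a (hs a (Finset.mem_cons_self a s))
    rw [Finset.prod_cons, Finset.sum_cons, Derivation.leibniz, smul_eq_mul, smul_eq_mul]
    linear_combination (∏ d ∈ s, gd d ^ m) * hA + (gd a ^ m) * hIH

lemma partialProd_def (m N : ℕ) :
    (∏ d ∈ Finset.Icc 1 N, ((1 - (PowerSeries.X : PowerSeries ℚ) ^ d)⁻¹) ^ m)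
      = ∏ d ∈ Finset.Icc 1 N, gd d ^ m := rfl

lemma gd_pow_one_add (M d : ℕ) (hd : 1 ≤ d) :
    ∃ C : PowerSeries ℚ, gd d ^ M = 1 + (X : PowerSeries ℚ) ^ d * C := by
  induction M with
  | zero => exact ⟨0, by simp⟩
  | succ k ih =>
    obtain ⟨c, hc⟩ := ih
    refine ⟨c * gd d + gd d, ?_⟩
    rw [pow_succ, hc]
    linear_combination gd_eq d hd

lemma tail_prod (n m : ℕ) (s : Finset ℕ) (hs : ∀ d ∈ s, n + 1 ≤ d) :
    ∃ C : PowerSeries ℚ, ∏ d ∈ s, gd d ^ m = 1 + (X : PowerSeries ℚ) ^ (n + 1) * C := by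
  revert hs
  induction s using Finset.cons_induction with
  | empty => intro _; exact ⟨0, by simp⟩
  | cons a s ha ih =>
    intro hs
    obtain ⟨c, hc⟩ := ih (fun d hd => hs d (Finset.mem_cons_of_mem hd))
    have ha1 : n + 1 ≤ a := hs a (Finset.mem_cons_self a s)
    obtain ⟨b, hb⟩ := gd_pow_one_add m a (by omega)
    have hXa : (X : PowerSeries ℚ) ^ a = X ^ (n + 1) * X ^ (a - (n + 1)) := by
      rw [← pow_add, Nat.add_sub_cancel' ha1]
    refine ⟨X ^ (a - (n+1)) * b + c + X ^ (n+1) * (X ^ (a - (n+1)) * b * c), ?_⟩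
    rw [Finset.prod_cons, hb, hc, hXa]
    ring

lemma hIcc (k : ℕ) : Finset.Icc 1 k = Finset.Ioc 0 k := by
  ext x; simp [Finset.mem_Icc, Finset.mem_Ioc]; omega

lemma stab (m : ℕ) {n N : ℕ} (h : n ≤ N) :
    coeff n (∏ d ∈ Finset.Icc 1 N, gd d ^ m)
      = coeff n (∏ d ∈ Finset.Icc 1 n, gd d ^ m) := by
  obtain ⟨C, hC⟩ := tail_prod n m (Finset.Ioc n N)
    (fun d hd => by rw [Finset.mem_Ioc] at hd; omega)
  have hsplit : (∏ d ∈ Finset.Icc 1 N, gd d ^ m)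
      = (∏ d ∈ Finset.Icc 1 n, gd d ^ m) + X ^ (n+1) * (C * ∏ d ∈ Finset.Icc 1 n, gd d ^ m) := by
    rw [hIcc, hIcc, ← Finset.prod_Ioc_consecutive _ (Nat.zero_le n) h, hC]
    ring
  rw [hsplit, map_add, coeff_X_pow_mul', if_neg (by omega), add_zero]

noncomputable def Gpart (N : ℕ) : PowerSeries ℚ :=
  ∑ d ∈ Finset.Icc 1 N, (d : PowerSeries ℚ) * X ^ d * gd d

lemma Gpart_def (N : ℕ) :
    Gpart N = ∑ d ∈ Finset.Icc 1 N, (d : PowerSeries ℚ) * X ^ d * gd d := rfl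

lemma coeff_Gpart {n N : ℕ} (h : n ≤ N) : coeff n (Gpart N) = coeff n Gser := by
  rw [Gpart_def, map_sum, Gser, coeff_mk]
  have hterm : ∀ d ∈ Finset.Icc 1 N, coeff n ((d : PowerSeries ℚ) * X ^ d * gd d)
      = if d ∣ n ∧ n ≠ 0 then (d : ℚ) else 0 := by
    intro d hd
    rw [Finset.mem_Icc] at hd
    have hC : ((d : PowerSeries ℚ) * X ^ d * gd d) = C (d : ℚ) * (X ^ d * gd d) := by
      rw [map_natCast C]; ring
    rw [hC, coeff_C_mul, coeff_X_pow_mul']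
    by_cases h0 : n = 0
    · subst h0
      rw [if_neg (by omega), if_neg (by simp)]
      ring
    · by_cases hdn : d ∣ n
      · have hdle : d ≤ n := Nat.le_of_dvd (by omega) hdn
        rw [if_pos hdle, coeff_gd d _ (by omega), if_pos (Nat.dvd_sub hdn dvd_rfl),
          if_pos ⟨hdn, h0⟩]
        ring
      · by_cases hdle : d ≤ n
        · rw [if_pos hdle, coeff_gd d _ (by omega), if_neg (fun hc => hdn (by
            have h2 := Nat.dvd_add hc (dvd_refl d)
            rwa [Nat.sub_add_cancel hdle] at h2)),
            if_neg (fun hc : d ∣ n ∧ n ≠ 0 => hdn hc.1)]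
          ring
        · rw [if_neg hdle, if_neg (fun hc : d ∣ n ∧ n ≠ 0 => hdn hc.1)]; ring
  rw [Finset.sum_congr rfl hterm]
  by_cases h0 : n = 0
  · subst h0; simp
  · rw [if_neg h0]
    have h1 : ∀ d ∈ Finset.Icc 1 N,
        (if d ∣ n ∧ n ≠ 0 then (d : ℚ) else 0) = if d ∣ n then (d : ℚ) else 0 := by
      intro d _; simp [h0]
    rw [Finset.sum_congr rfl h1, ← Finset.sum_filter]
    have hfil : (Finset.Icc 1 N).filter (· ∣ n) = n.divisors := by
      ext d
      simp only [Finset.mem_filter, Finset.mem_Icc, Nat.mem_divisors]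
      constructor
      · rintro ⟨⟨_, _⟩, h3⟩; exact ⟨h3, h0⟩
      · rintro ⟨h1, _⟩
        have hd1 : 1 ≤ d := Nat.pos_of_dvd_of_pos h1 (Nat.pos_of_ne_zero h0)
        exact ⟨⟨hd1, le_trans (Nat.le_of_dvd (Nat.pos_of_ne_zero h0) h1) h⟩, h1⟩
    rw [hfil, sigmaFun, Nat.cast_sum]

lemma coeff_mul_congr {A A' B B' : PowerSeries ℚ} {n : ℕ}
    (hA : ∀ i ≤ n, coeff i A = coeff i A')
    (hB : ∀ i ≤ n, coeff i B = coeff i B') :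
    coeff n (A * B) = coeff n (A' * B') := by
  rw [coeff_mul, coeff_mul]
  apply Finset.sum_congr rfl
  intro p hp
  rw [Finset.HasAntidiagonal.mem_antidiagonal] at hp
  rw [hA p.1 (by omega), hB p.2 (by omega)]

theorem Pser_constantCoeff_and_ODE (m : ℕ) :
    PowerSeries.constantCoeff (Pser m) = 1 ∧
      (PowerSeries.X : PowerSeries ℚ) * PowerSeries.derivative ℚ (Pser m)
        = (m : PowerSeries ℚ) * Gser * Pser m := by
  constructor
  · rw [← coeff_zero_eq_constantCoeff, Pser, coeff_mk, partialProd,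
      Finset.Icc_eq_empty (by omega), Finset.prod_empty]
    simp
  · ext n
    cases n with
    | zero =>
      rw [coeff_zero_eq_constantCoeff, map_mul, constantCoeff_X, zero_mul, map_mul, map_mul]
      have : constantCoeff Gser = 0 := by
        rw [Gser, ← coeff_zero_eq_constantCoeff, coeff_mk]; simp
      rw [this]
      ring
    | succ k =>
      have hP : ∀ j, j ≤ k + 1 → coeff j (Pser m)
          = coeff j (∏ d ∈ Finset.Icc 1 (k+1), gd d ^ m) := by
        intro j hj
        rw [Pser, coeff_mk, partialProd, partialProd_def, stab m hj]
      have hODE := prod_ODE m (Finset.Icc 1 (k+1)) (fun d hd => (Finset.mem_Icc.mp hd).1)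
      rw [← Gpart_def] at hODE
      rw [coeff_succ_X_mul, coeff_derivative, hP (k+1) le_rfl, ← coeff_derivative,
        ← coeff_succ_X_mul, hODE, mul_assoc, mul_assoc,
        show ((m : PowerSeries ℚ)) = C (m : ℚ) from (map_natCast C m).symm,
        coeff_C_mul, coeff_C_mul]
      congr 1
      exact coeff_mul_congr (fun i hi => coeff_Gpart hi) (fun i hi => (hP i hi).symm)
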